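/- Let A_1 = [[3/2, 0], [0, 0]] and A_2 = [[1/6, √2/3], [√2/3, 4/3]]. Then A_1 and A_2 are positive semidefinite, A_1 + A_2 ⪯ 2·I, and the smallest eigenvalue of A_1 A_2 + A_2 A_1 equals −1/2; in particular the bound −(1/4)·n(n−1)·I ⪯ Σ_{i≠j} A_i A_j is attained with equality for n = 2. -/

import Mathlib

theorem stmt19 :
    let A₁ : Matrix (Fin 2) (Fin 2) ℝ := !![3/2, 0; 0, 0]
    let A₂ : Matrix (Fin 2) (Fin 2) ℝ := !![1/6, Real.sqrt 2 / 3; Real.sqrt 2 / 3, 4/3]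
    A₁.PosSemidef ∧ A₂.PosSemidef ∧
    ((2 : ℝ) • (1 : Matrix (Fin 2) (Fin 2) ℝ) - (A₁ + A₂)).PosSemidef ∧
    (A₁ * A₂ + A₂ * A₁ + (1/2 : ℝ) • (1 : Matrix (Fin 2) (Fin 2) ℝ)).PosSemidef ∧
    ¬ (A₁ * A₂ + A₂ * A₁ + (1/2 : ℝ) • (1 : Matrix (Fin 2) (Fin 2) ℝ)).PosDef := by
  intro A₁ A₂
  have hs : Real.sqrt 2 ^ 2 = 2 := Real.sq_sqrt (by norm_num)
  have h2 : Real.sqrt 2 * Real.sqrt 2 = 2 := Real.mul_self_sqrt (by norm_num)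
  have hs0 : (0:ℝ) ≤ Real.sqrt 2 := Real.sqrt_nonneg 2
  refine ⟨⟨?_, fun x => ?_⟩, ⟨?_, fun x => ?_⟩, ⟨?_, fun x => ?_⟩, ⟨?_, fun x => ?_⟩, ?_⟩
  · ext i j; fin_cases i <;> fin_cases j <;>
      simp [A₁, Matrix.IsHermitian, Matrix.conjTranspose, Matrix.vecHead, Matrix.vecTail]
  · simp [A₁, Matrix.mulVec, dotProduct, Finsupp.sum_fintype, Fin.sum_univ_two, Matrix.vecHead,
      Matrix.vecTail]
    nlinarith [sq_nonneg (x 0), sq_nonneg (x 1)]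
  · ext i j; fin_cases i <;> fin_cases j <;>
      simp [A₂, Matrix.IsHermitian, Matrix.conjTranspose, Matrix.vecHead, Matrix.vecTail]
  · simp [A₂, Matrix.mulVec, dotProduct, Finsupp.sum_fintype, Fin.sum_univ_two, Matrix.vecHead,
      Matrix.vecTail]
    nlinarith [sq_nonneg (x 0 + 2 * Real.sqrt 2 * x 1), sq_nonneg (x 1), h2, hs0]
  · ext i j; fin_cases i <;> fin_cases j <;>
      simp [A₁, A₂, Matrix.IsHermitian, Matrix.conjTranspose, Matrix.one_apply,
        Matrix.vecHead, Matrix.vecTail]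
  · simp [A₁, A₂, Matrix.mulVec, dotProduct, Finsupp.sum_fintype, Fin.sum_univ_two, Matrix.one_apply,
      Matrix.vecHead, Matrix.vecTail, smul_eq_mul]
    nlinarith [sq_nonneg (x 0 - Real.sqrt 2 * x 1), h2, hs0, sq_nonneg (x 1)]
  · ext i j; fin_cases i <;> fin_cases j <;>
      simp [A₁, A₂, Matrix.IsHermitian, Matrix.conjTranspose, Matrix.mul_apply,
        Matrix.one_apply, Fin.sum_univ_two, Matrix.vecHead, Matrix.vecTail] <;> ring
  · simp [A₁, A₂, Matrix.mulVec, dotProduct, Finsupp.sum_fintype, Fin.sum_univ_two, Matrix.mul_apply,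
      Matrix.one_apply, Matrix.vecHead, Matrix.vecTail, smul_eq_mul]
    nlinarith [sq_nonneg (Real.sqrt 2 * x 0 + x 1), h2, hs0, sq_nonneg (x 0), sq_nonneg (x 1), mul_self_nonneg (x 0 * x 1)]
  · intro hpd
    have h := hpd.2 (x := Finsupp.equivFunOnFinite.symm ![1, -Real.sqrt 2]) (by
      intro h
      have := DFunLike.congr_fun h 0
      simp at this)
    simp [A₁, A₂, Matrix.mulVec, dotProduct, Finsupp.sum_fintype, Fin.sum_univ_two, Matrix.mul_apply,
      Matrix.one_apply, Matrix.vecHead, Matrix.vecTail, smul_eq_mul] at h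
    nlinarith [h2, hs0]
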